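/- If E is a centrally orthocomplete generalized pseudoeffect algebra (COGPEA) and (π_i)_{i∈I} is a pairwise disjoint family in ΓEX(E), then the supremum ⋁_{i∈I} π_i exists in the boolean algebra ΓEX(E) and for every e ∈ E one has (⋁_{i∈I} π_i)e = ⋁_{i∈I} π_i e = ⊕_{i∈I} π_i e. Consequently, the exocenter ΓEX(E) of a COGPEA is a complete boolean algebra. -/

import Mathlib

/- Common framework: generalized pseudoeffect algebras (GPEAs), after
   Foulis, Pulmannová, Vinceková, "The exocenter and type decompositions for
   generalized pseudoeffect algebras".
   A partial binary operation ⊕ is represented by its graph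
   `R : E → E → E → Prop`, where `R a b s` means "a ⊕ b is defined and equals s". -/

universe u v

namespace GPEApaper

/-- Raw data of a partial algebra: the graph of a partial binary operation
together with a zero element. -/
structure PartialAlg (E : Type u) where
  R : E → E → E → Prop
  zero : E

namespace PartialAlg

variable {E : Type u} (A : PartialAlg E)

/-- The axioms (GPEA1)–(GPEA5) of a generalized pseudoeffect algebra,
including the functionality (well-definedness) of the partial operation. -/
def IsGPEA : Prop :=
  -- ⊕ is a partial operation (single-valued)
  (∀ a b c d : E, A.R a b c → A.R a b d → c = d) ∧
  -- (GPEA1) associativity, both directions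
  (∀ a b c ab abc : E, A.R a b ab → A.R ab c abc → ∃ bc, A.R b c bc ∧ A.R a bc abc) ∧
  (∀ a b c bc abc : E, A.R b c bc → A.R a bc abc → ∃ ab, A.R a b ab ∧ A.R ab c abc) ∧
  -- (GPEA2) conjugacy
  (∀ a b s : E, A.R a b s → (∃ d, A.R d a s) ∧ (∃ e, A.R b e s)) ∧
  -- (GPEA3) cancellation
  (∀ a b c s : E, A.R a b s → A.R a c s → b = c) ∧
  (∀ a b c s : E, A.R b a s → A.R c a s → b = c) ∧
  -- (GPEA4) positivity
  (∀ a b : E, A.R a b A.zero → a = A.zero ∧ b = A.zero) ∧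
  -- (GPEA5) zero element
  (∀ a : E, A.R a A.zero a ∧ A.R A.zero a a)

/-- a ⊕ b is defined. -/
def Defined (a b : E) : Prop := ∃ s, A.R a b s

/-- The induced partial order: a ≤ b iff a ⊕ x = b for some x. -/
def le (a b : E) : Prop := ∃ x, A.R a x b

/-- Orthogonality: p ⊥ q iff p ⊕ q and q ⊕ p both exist and are equal. -/
def perp (a b : E) : Prop := ∃ s, A.R a b s ∧ A.R b a s

/-- b is an upper bound of the set S. -/
def IsUB (S : Set E) (b : E) : Prop := ∀ a ∈ S, A.le a b

/-- s is the supremum (least upper bound) of the set S in (E, ≤). -/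
def IsSup (S : Set E) (s : E) : Prop := A.IsUB S s ∧ ∀ b, A.IsUB S b → A.le s b

/-- s is the infimum (greatest lower bound) of the set S in (E, ≤). -/
def IsInf (S : Set E) (s : E) : Prop :=
  (∀ a ∈ S, A.le s a) ∧ ∀ b, (∀ a ∈ S, A.le b a) → A.le b s

/-- An ideal of a GPEA. -/
def IsIdeal (I : Set E) : Prop :=
  I.Nonempty ∧ (∀ a ∈ I, ∀ b, A.le b a → b ∈ I) ∧
    ∀ a ∈ I, ∀ b ∈ I, ∀ s, A.R a b s → s ∈ I

/-- E = S ⊕ S′ : S and S′ are ideals, elements of S are orthogonal to elements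
of S′, and every element of E has a unique decomposition a = a₁ ⊕ a₂ with
a₁ ∈ S, a₂ ∈ S′. -/
def IsDirectSum (S S' : Set E) : Prop :=
  A.IsIdeal S ∧ A.IsIdeal S' ∧ (∀ a ∈ S, ∀ b ∈ S', A.perp a b) ∧
    ∀ a : E, ∃! p : E × E, p.1 ∈ S ∧ p.2 ∈ S' ∧ A.R p.1 p.2 a

/-- A central ideal (direct summand). -/
def IsCentralIdeal (S : Set E) : Prop := ∃ S', A.IsDirectSum S S'

/-- A normal ideal. -/
def IsNormalIdeal (I : Set E) : Prop :=
  A.IsIdeal I ∧ ∀ a x y s : E, A.R a x s → A.R y a s → (x ∈ I ↔ y ∈ I)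

/-- The axioms (EXC1)–(EXC4): π belongs to the exocenter ΓEX(E). -/
def IsExo (π : E → E) : Prop :=
  (∀ e f s, A.R e f s → A.R (π e) (π f) (π s)) ∧
  (∀ e, π (π e) = π e) ∧
  (∀ e, A.le (π e) e) ∧
  (∀ e f, π e = e → π f = A.zero → A.perp e f)

/-- For a ≤ b, `A.rdiv a b` is the element a/b, i.e. the unique x with
a ⊕ x = b (chosen by Hilbert choice when it exists). -/
noncomputable def rdiv (a b : E) : E :=
  letI : Nonempty E := ⟨A.zero⟩
  Classical.epsilon fun x => A.R a x b

/-- For π in the exocenter, π′ e := (π e)/e. -/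
noncomputable def exoCompl (π : E → E) : E → E := fun e => A.rdiv (π e) e

/-- The order on the exocenter: ξ ≤ π iff ξ = ξ ∘ π. -/
def exoLe (_A : PartialAlg E) (ξ π : E → E) : Prop := ξ = ξ ∘ π

/-- Disjointness in the boolean algebra ΓEX(E): the meet (= composition)
of ξ and π is the zero map. -/
def exoDisjoint (ξ π : E → E) : Prop := ∀ e, ξ (π e) = A.zero

/-- The join in the boolean algebra ΓEX(E): π ∨ ξ = (π′ ∘ ξ′)′. -/
noncomputable def exoSup (π ξ : E → E) : E → E :=
  A.exoCompl (A.exoCompl π ∘ A.exoCompl ξ)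

/-- σ is the least upper bound of a set S of exocenter elements,
with respect to the order of the boolean algebra ΓEX(E). -/
def IsExoLUB (S : Set (E → E)) (σ : E → E) : Prop :=
  A.IsExo σ ∧ (∀ π ∈ S, A.exoLe π σ) ∧
    ∀ β, A.IsExo β → (∀ π ∈ S, A.exoLe π β) → A.exoLe σ β

/-- A central element (C1)–(C4). -/
def Central (c : E) : Prop :=
  (∀ a : E, ∃ a₁ a₂, A.le a₁ c ∧ A.Defined a₂ c ∧ A.R a₁ a₂ a) ∧
  (∀ a b : E, A.le a c → A.Defined b c → A.perp a b) ∧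
  (∀ a b s : E, A.le a c → A.le b c → A.R a b s → A.le s c) ∧
  (∀ a b ab : E, A.Defined a c → A.Defined b c → A.R a b ab → A.Defined ab c)

/-- `A.ListSumsTo [e₁, …, eₙ] s` : the orthosum e₁ ⊕ (e₂ ⊕ (⋯ ⊕ eₙ)) is
defined and equals s (empty orthosum is 0). -/
def ListSumsTo (A : PartialAlg E) : List E → E → Prop
  | [], s => s = A.zero
  | a :: l, s => ∃ t, A.ListSumsTo l t ∧ A.R a t s

/-- The finite subfamily indexed by F is orthogonal with orthosum s:
every enumeration of F yields the orthosum s. -/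
def FinsetSumsTo {ι : Type v} (e : ι → E) (F : Finset ι) (s : E) : Prop :=
  ∀ l : List ι, l.Nodup →
    (letI : DecidableEq ι := Classical.decEq ι; l.toFinset) = F →
    A.ListSumsTo (l.map e) s

/-- A family is orthogonal iff every finite subfamily is orthogonal
(all enumerations have a common orthosum). -/
def IsOrthogonal {ι : Type v} (e : ι → E) : Prop :=
  ∀ F : Finset ι, ∃ s, A.FinsetSumsTo e F s

/-- A family is orthosummable with orthosum s iff it is orthogonal and s is
the supremum of its finite partial orthosums. -/
def IsOrthosum {ι : Type v} (e : ι → E) (s : E) : Prop :=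
  A.IsOrthogonal e ∧ A.IsSup {t | ∃ F : Finset ι, A.FinsetSumsTo e F t} s

/-- A family (eᵢ) is ΓEX-orthogonal iff there is a pairwise disjoint family
(πᵢ) in the exocenter with πᵢ eᵢ = eᵢ for all i. -/
def GEXOrthogonal {ι : Type v} (e : ι → E) : Prop :=
  ∃ π : ι → E → E, (∀ i, A.IsExo (π i)) ∧
    (∀ i j, i ≠ j → A.exoDisjoint (π i) (π j)) ∧ ∀ i, π i (e i) = e i

/-- E is centrally orthocomplete: (CO1) every ΓEX-orthogonal family is
orthosummable, and (CO2) orthosums respect one-sided summability. -/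
def IsCOGPEA : Prop :=
  (∀ {ι : Type u} (e : ι → E), A.GEXOrthogonal e → ∃ s, A.IsOrthosum e s) ∧
  (∀ {ι : Type u} (e : ι → E) (s : E), A.GEXOrthogonal e → A.IsOrthosum e s →
    ∀ a : E, ((∀ i, A.Defined a (e i)) → A.Defined a s) ∧
             ((∀ i, A.Defined (e i) a) → A.Defined s a))

/-- γ is the exocentral cover of e: the smallest element of ΓEX(E) fixing e. -/
def IsExoCover (e : E) (γ : E → E) : Prop :=
  A.IsExo γ ∧ γ e = e ∧ ∀ π, A.IsExo π → π e = e → A.exoLe γ π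

/-- The restriction of the partial algebra to a subset containing 0 (with the
operation defined whenever it is defined in E and the result lies in the subset). -/
def restrictSet (S : Set E) (h0 : A.zero ∈ S) : PartialAlg S where
  R a b s := A.R a.1 b.1 s.1
  zero := ⟨A.zero, h0⟩

/-- The axioms (PEA1)–(PEA4) of a pseudoeffect algebra with unit `one`
(including single-valuedness of the partial operation). -/
def IsPEA (one : E) : Prop :=
  (∀ a b c d : E, A.R a b c → A.R a b d → c = d) ∧
  -- (PEA1)
  (∀ a b c ab abc : E, A.R a b ab → A.R ab c abc → ∃ bc, A.R b c bc ∧ A.R a bc abc) ∧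
  (∀ a b c bc abc : E, A.R b c bc → A.R a bc abc → ∃ ab, A.R a b ab ∧ A.R ab c abc) ∧
  -- (PEA2)
  (∀ a : E, ∃! d, A.R a d one) ∧
  (∀ a : E, ∃! e, A.R e a one) ∧
  -- (PEA3)
  (∀ a b s : E, A.R a b s → (∃ d, A.R d a s) ∧ (∃ e, A.R b e s)) ∧
  -- (PEA4)
  (∀ a s : E, A.R one a s ∨ A.R a one s → a = A.zero)

end PartialAlg

end GPEApaper


set_option linter.unusedSectionVars false
namespace GPEAproof
open GPEApaper PartialAlg

variable {E : Type u} {A : PartialAlg E}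

section Basics
variable (hA : A.IsGPEA)
include hA

lemma uniq {a b c d : E} (h1 : A.R a b c) (h2 : A.R a b d) : c = d := hA.1 a b c d h1 h2
lemma assoc1 {a b c ab abc : E} (h1 : A.R a b ab) (h2 : A.R ab c abc) :
    ∃ bc, A.R b c bc ∧ A.R a bc abc := hA.2.1 a b c ab abc h1 h2
lemma assoc2 {a b c bc abc : E} (h1 : A.R b c bc) (h2 : A.R a bc abc) :
    ∃ ab, A.R a b ab ∧ A.R ab c abc := hA.2.2.1 a b c bc abc h1 h2
lemma conj {a b s : E} (h : A.R a b s) : (∃ d, A.R d a s) ∧ (∃ e, A.R b e s) :=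
  hA.2.2.2.1 a b s h
lemma cancL {a b c s : E} (h1 : A.R a b s) (h2 : A.R a c s) : b = c :=
  hA.2.2.2.2.1 a b c s h1 h2
lemma cancR {a b c s : E} (h1 : A.R b a s) (h2 : A.R c a s) : b = c :=
  hA.2.2.2.2.2.1 a b c s h1 h2
lemma pos {a b : E} (h : A.R a b A.zero) : a = A.zero ∧ b = A.zero :=
  hA.2.2.2.2.2.2.1 a b h
lemma zeroR (a : E) : A.R a A.zero a := (hA.2.2.2.2.2.2.2 a).1
lemma zeroL (a : E) : A.R A.zero a a := (hA.2.2.2.2.2.2.2 a).2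

/-- left divisibility -/
def leL (A : PartialAlg E) (a b : E) : Prop := ∃ x, A.R x a b

lemma le_of_leL {a b : E} (h : leL A a b) : A.le a b := by
  obtain ⟨x, hx⟩ := h; exact (conj hA hx).2
lemma leL_of_le {a b : E} (h : A.le a b) : leL A a b := by
  obtain ⟨x, hx⟩ := h; exact (conj hA hx).1
lemma le_refl (a : E) : A.le a a := ⟨A.zero, zeroR hA a⟩
lemma le_trans {a b c : E} (h1 : A.le a b) (h2 : A.le b c) : A.le a c := by
  obtain ⟨x, hx⟩ := h1; obtain ⟨y, hy⟩ := h2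
  obtain ⟨xy, -, h⟩ := assoc1 hA hx hy
  exact ⟨xy, h⟩
lemma le_antisymm {a b : E} (h1 : A.le a b) (h2 : A.le b a) : a = b := by
  obtain ⟨x, hx⟩ := h1; obtain ⟨y, hy⟩ := h2
  obtain ⟨xy, hxy, h⟩ := assoc1 hA hx hy
  have h0 : xy = A.zero := cancL hA h (zeroR hA a)
  subst h0
  have := pos hA hxy
  rw [this.1] at hx
  exact uniq hA (zeroR hA a) hx
lemma zero_le (a : E) : A.le A.zero a := ⟨a, zeroL hA a⟩
lemma le_zero {a : E} (h : A.le a A.zero) : a = A.zero := by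
  obtain ⟨x, hx⟩ := h; exact (pos hA hx).1
lemma le_of_R_left {a b s : E} (h : A.R a b s) : A.le a s := ⟨b, h⟩
lemma le_of_R_right {a b s : E} (h : A.R a b s) : A.le b s := le_of_leL hA ⟨a, h⟩
lemma perp_symm {a b : E} (h : A.perp a b) : A.perp b a := by
  obtain ⟨s, h1, h2⟩ := h; exact ⟨s, h2, h1⟩

/-- monotonicity of the sum: if a ≤ a', b ≤ b', a⊕b = x and a'⊕b' = y then x ≤ y. -/
lemma mono2 {a a' b b' x y : E} (ha : A.le a a') (hb : A.le b b')
    (hx : A.R a b x) (hy : A.R a' b' y) : A.le x y := by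
  obtain ⟨p, hp⟩ := leL_of_le hA ha
  obtain ⟨q, hq⟩ := hb
  obtain ⟨ab', hab', hy'⟩ := assoc1 hA hp hy
  obtain ⟨ab, hab, habq⟩ := assoc2 hA hq hab'
  have : ab = x := uniq hA hab hx
  subst this
  exact le_trans hA (le_of_R_left hA habq) (le_of_leL hA ⟨p, hy'⟩)

end Basics

section Exo
variable (hA : A.IsGPEA)
include hA

lemma exo_zero {π : E → E} (hπ : A.IsExo π) : π A.zero = A.zero := by
  have h := hπ.1 _ _ _ (zeroR hA A.zero)
  exact cancL hA h (zeroR hA (π A.zero))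

lemma exo_mono {π : E → E} (hπ : A.IsExo π) {a b : E} (h : A.le a b) :
    A.le (π a) (π b) := by
  obtain ⟨x, hx⟩ := h; exact ⟨π x, hπ.1 _ _ _ hx⟩

lemma fix_sum {π : E → E} (hπ : A.IsExo π) {a b s : E} (ha : π a = a) (hb : π b = b)
    (h : A.R a b s) : π s = s := by
  have := hπ.1 _ _ _ h; rw [ha, hb] at this; exact uniq hA this h

lemma ker_sum {π : E → E} (hπ : A.IsExo π) {a b s : E} (ha : π a = A.zero)
    (hb : π b = A.zero) (h : A.R a b s) : π s = A.zero := by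
  have := hπ.1 _ _ _ h; rw [ha, hb] at this
  exact uniq hA this (zeroR hA A.zero)

lemma ker_of_le {π : E → E} (hπ : A.IsExo π) {a b : E} (hb : π b = A.zero)
    (h : A.le a b) : π a = A.zero := by
  obtain ⟨x, hx⟩ := h
  have := hπ.1 _ _ _ hx; rw [hb] at this
  exact (pos hA this).1

/-- decomposition e = πe ⊕ f with πf = 0. -/
lemma exo_decomp {π : E → E} (hπ : A.IsExo π) (e : E) :
    ∃ f, A.R (π e) f e ∧ π f = A.zero := by
  obtain ⟨f, hf⟩ := hπ.2.2.1 e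
  refine ⟨f, hf, ?_⟩
  have h2 := hπ.1 _ _ _ hf
  rw [hπ.2.1] at h2
  exact cancL hA h2 (zeroR hA (π e))

lemma fix_of_le {π : E → E} (hπ : A.IsExo π) {a b : E} (hb : π b = b)
    (h : A.le a b) : π a = a := by
  obtain ⟨f, hf, hπf⟩ := exo_decomp hA hπ a
  have hfb : A.le f b := le_trans hA (le_of_R_right hA hf) h
  obtain ⟨y, hy⟩ := hfb
  have h3 := hπ.1 _ _ _ hy
  rw [hπf, hb] at h3
  have hπy : π y = b := cancL hA h3 (zeroL hA b)
  have hyb : A.le y b := le_of_R_right hA hy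
  have : y = b := le_antisymm hA hyb (hπy ▸ hπ.2.2.1 y)
  subst this
  have : f = A.zero := cancR hA hy (zeroL hA y)
  subst this
  exact (uniq hA hf (zeroR hA (π a))) ▸ rfl

lemma exo_perp {π : E → E} (hπ : A.IsExo π) {a b : E} (ha : π a = a)
    (hb : π b = A.zero) : A.perp a b := hπ.2.2.2 a b ha hb

lemma exo_comm {π ξ : E → E} (hπ : A.IsExo π) (hξ : A.IsExo ξ) (e : E) :
    π (ξ e) = ξ (π e) := by
  obtain ⟨f, hf, hπf⟩ := exo_decomp hA hπ e
  have h1 := hξ.1 _ _ _ hf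
  have h2 := hπ.1 _ _ _ h1
  have hπξf : π (ξ f) = A.zero := ker_of_le hA hπ hπf (hξ.2.2.1 f)
  rw [hπξf] at h2
  have h3 : π (ξ e) = π (ξ (π e)) := uniq hA h2 (zeroR hA _)
  have h4 : π (ξ (π e)) = ξ (π e) :=
    fix_of_le hA hπ (hπ.2.1 e) (hξ.2.2.1 (π e))
  rw [h3, h4]

/-- the pure rearrangement lemma: from x⊕y = s, g₁⊕g₂ = g and suitable
commutation data, conclude s⊕g = T. -/
lemma four_shuffle {x y s g₁ g₂ g u v w₃ w₂ T : E}
    (hxy : A.R x y s) (hg : A.R g₁ g₂ g)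
    (hxg₁ : A.R x g₁ u) (hyg₂ : A.R y g₂ v)
    (hg₁y : A.R g₁ y w₃) (hyg₁ : A.R y g₁ w₃)
    (hg₁v : A.R g₁ v w₂) (hT : A.R u v T) : A.R s g T := by
  -- R w₃ g₂ w₂
  obtain ⟨g₁y, hg₁y', hw⟩ := assoc2 hA hyg₂ hg₁v
  have : g₁y = w₃ := uniq hA hg₁y' hg₁y
  subst this
  -- R y g w₂
  obtain ⟨g', hg', hyg⟩ := assoc1 hA hyg₁ hw
  have : g' = g := uniq hA hg' hg
  subst this
  -- R x w₂ T
  obtain ⟨w, hw', hxw⟩ := assoc1 hA hxg₁ hT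
  have : w = w₂ := uniq hA hw' hg₁v
  subst this
  -- conclude
  obtain ⟨xy, hxy', hfin⟩ := assoc2 hA hyg hxw
  have : xy = s := uniq hA hxy' hxy
  subst this
  exact hfin

/-- the structured perp-sum lemma. -/
lemma perp_sum {π : E → E} (hπ : A.IsExo π) {x y f g : E} (hx : π x = x)
    (hy : π y = A.zero) (hxy : A.R x y f) (hgx : A.perp g x) (hgy : A.perp g y) :
    A.perp g f := by
  obtain ⟨t₁, hgx1, hxg1⟩ := hgx
  obtain ⟨t₂, hgy1, hyg1⟩ := hgy
  obtain ⟨g₂, hg, hg₂⟩ := exo_decomp hA hπ g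
  set g₁ := π g with hg₁def
  have hg₁fix : π g₁ = g₁ := hπ.2.1 g
  -- perp x g₁ with value u := π t₁
  have hu1 : A.R g₁ x (π t₁) := by have := hπ.1 _ _ _ hgx1; rwa [hx] at this
  have hu2 : A.R x g₁ (π t₁) := by have := hπ.1 _ _ _ hxg1; rwa [hx] at this
  set u := π t₁ with hudef
  have hufix : π u = u := hπ.2.1 t₁
  -- perp g₂ y with value v
  obtain ⟨g₂y, hg₂y, ht₂a⟩ := assoc1 hA hg hgy1
  obtain ⟨yg₁, hyg₁, ht₂b⟩ := assoc2 hA hg hyg1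
  obtain ⟨w₃, hg₁y, hyg₁'⟩ := exo_perp hA hπ hg₁fix hy
  have : yg₁ = w₃ := uniq hA hyg₁ hyg₁'
  subst this
  obtain ⟨yg₂, hyg₂, ht₂c⟩ := assoc1 hA hg₁y ht₂b
  have hveq : g₂y = yg₂ := cancL hA ht₂a ht₂c
  rw [hveq] at hg₂y
  set v := yg₂ with hvdef
  have hvker : π v = A.zero := ker_sum hA hπ hy hg₂ hyg₂
  -- T := u ⊕ v
  obtain ⟨T, huv, hvu⟩ := exo_perp hA hπ hufix hvker
  -- w₂ := g₁ ⊕ v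
  obtain ⟨w₂, hg₁v, hvg₁⟩ := exo_perp hA hπ hg₁fix hvker
  -- mirror data : perp x g₂, perp x v
  obtain ⟨w₃', hxg₂, hg₂x⟩ := exo_perp hA hπ hx hg₂
  obtain ⟨w₂', hxv, hvx⟩ := exo_perp hA hπ hx hvker
  refine ⟨T, ?_, ?_⟩
  · -- R g f T
    exact four_shuffle hA hg hxy hu1 hg₂y hxg₂ hg₂x hxv huv
  · -- R f g T
    exact four_shuffle hA hxy hg hu2 hyg₂ hg₁y hyg₁' hg₁v huv

end Exo

section Compl
variable (hA : A.IsGPEA)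
include hA

lemma exoCompl_spec {π : E → E} (hπ : A.IsExo π) (e : E) :
    A.R (π e) (A.exoCompl π e) e := by
  have h : ∃ x, A.R (π e) x e := hπ.2.2.1 e
  exact Classical.epsilon_spec h

lemma exoCompl_unique {π : E → E} (hπ : A.IsExo π) {e x : E}
    (h : A.R (π e) x e) : A.exoCompl π e = x :=
  cancL hA (exoCompl_spec hA hπ e) h

lemma compl_ker {π : E → E} (hπ : A.IsExo π) (e : E) :
    π (A.exoCompl π e) = A.zero := by
  obtain ⟨f, hf, hπf⟩ := exo_decomp hA hπ e
  rw [exoCompl_unique hA hπ hf]; exact hπf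

lemma compl_of_ker {π : E → E} (hπ : A.IsExo π) {a : E} (ha : π a = A.zero) :
    A.exoCompl π a = a :=
  exoCompl_unique hA hπ (by rw [ha]; exact zeroL hA a)

lemma compl_of_fix {π : E → E} (hπ : A.IsExo π) {a : E} (ha : π a = a) :
    A.exoCompl π a = A.zero :=
  exoCompl_unique hA hπ (by rw [ha]; exact zeroR hA a)

lemma exoCompl_isExo {π : E → E} (hπ : A.IsExo π) : A.IsExo (A.exoCompl π) := by
  set π' := A.exoCompl π with hπ'def
  have spec : ∀ e, A.R (π e) (π' e) e := exoCompl_spec hA hπ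
  refine ⟨?_, ?_, ?_, ?_⟩
  · intro e f s h
    obtain ⟨v, hv, hs1⟩ := assoc1 hA (spec e) h
    -- v = π'e ⊕ f
    obtain ⟨w, hw, hw2⟩ := assoc2 hA (spec f) hv
    -- w = π'e ⊕ πf; swap to πf ⊕ π'e
    obtain ⟨w0, h1, h2⟩ := exo_perp hA hπ (hπ.2.1 f) (compl_ker hA hπ e)
    have : w = w0 := uniq hA hw h2
    subst this
    obtain ⟨uu, huu, hfin⟩ := assoc1 hA h1 hw2
    -- uu = π'e ⊕ π'f, πf ⊕ uu = v
    obtain ⟨ab, hab, habu⟩ := assoc2 hA hfin hs1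
    have : ab = π s := uniq hA hab (hπ.1 _ _ _ h)
    subst this
    have : π' s = uu := cancL hA (spec s) habu
    rw [this]; exact huu
  · intro e
    exact compl_of_ker hA hπ (compl_ker hA hπ e)
  · intro e
    exact le_of_leL hA ⟨π e, spec e⟩
  · intro e f he hf
    -- π' e = e gives π e = 0 ; π' f = 0 gives π f = f
    have hπe : π e = A.zero := by
      have h1 := spec e; rw [he] at h1
      exact cancR hA h1 (zeroL hA e)
    have hπf : π f = f := by
      have h1 := spec f; rw [hf] at h1
      exact uniq hA (zeroR hA (π f)) h1
    exact perp_symm hA (exo_perp hA hπ hπf hπe)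

lemma compl_compl {π : E → E} (hπ : A.IsExo π) :
    A.exoCompl (A.exoCompl π) = π := by
  funext e
  have h1 := exoCompl_spec hA hπ e
  obtain ⟨s, h2, h3⟩ := exo_perp hA hπ (hπ.2.1 e) (compl_ker hA hπ e)
  have : s = e := uniq hA h2 h1
  subst this
  exact exoCompl_unique hA (exoCompl_isExo hA hπ) h3

lemma comp_isExo {π ξ : E → E} (hπ : A.IsExo π) (hξ : A.IsExo ξ) :
    A.IsExo (π ∘ ξ) := by
  refine ⟨fun e f s h => hπ.1 _ _ _ (hξ.1 _ _ _ h), ?_, ?_, ?_⟩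
  · intro e
    show π (ξ (π (ξ e))) = π (ξ e)
    rw [exo_comm hA hξ hπ, hπ.2.1, hξ.2.1]
  · intro e
    exact le_trans hA (hπ.2.2.1 (ξ e)) (hξ.2.2.1 e)
  · intro e f he hf
    have he' : π (ξ e) = e := he
    have hπe : π e = e := by
      refine le_antisymm hA (hπ.2.2.1 e) ?_
      have h0 := hξ.2.2.1 (π e)
      rw [← exo_comm hA hπ hξ, he'] at h0
      exact h0
    have hξe : ξ e = e := by
      refine le_antisymm hA (hξ.2.2.1 e) ?_
      have h0 := hπ.2.2.1 (ξ e)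
      rwa [he'] at h0
    -- decompose f = ξf ⊕ g with ξg = 0
    obtain ⟨g, hg, hξg⟩ := exo_decomp hA hξ f
    have hπξf : π (ξ f) = A.zero := hf
    -- perp e (ξ f) via π ; perp e g via ξ
    have hp1 : A.perp e (ξ f) := exo_perp hA hπ hπe hπξf
    have hp2 : A.perp e g := exo_perp hA hξ hξe hξg
    exact perp_sum hA hξ (hξ.2.1 f) hξg hg hp1 hp2

lemma exo_comm_fun {π ξ : E → E} (hπ : A.IsExo π) (hξ : A.IsExo ξ) :
    π ∘ ξ = ξ ∘ π := funext fun e => exo_comm hA hπ hξ e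

lemma exo_idem_fun {π : E → E} (hπ : A.IsExo π) : π ∘ π = π :=
  funext fun e => hπ.2.1 e

/-- the bottom map. -/
def obot (A : PartialAlg E) : E → E := fun _ => A.zero

lemma obot_isExo : A.IsExo (obot A) := by
  refine ⟨fun e f s _ => zeroR hA A.zero, fun _ => rfl, fun e => zero_le hA e, ?_⟩
  · intro e f he _
    have : e = A.zero := he.symm
    subst this
    exact ⟨f, zeroL hA f, zeroR hA f⟩

lemma id_isExo' : A.IsExo (id : E → E) := by
  refine ⟨fun e f s h => h, fun _ => rfl, fun e => le_refl hA e, ?_⟩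
  intro e f he hf
  have : f = A.zero := hf
  subst this
  exact ⟨e, zeroR hA e, zeroL hA e⟩

lemma compl_bot : A.exoCompl (obot A) = id := by
  funext e
  exact exoCompl_unique hA (obot_isExo hA) (zeroL hA e)

lemma compl_top : A.exoCompl (id : E → E) = obot A := by
  funext e
  exact exoCompl_unique hA (id_isExo' hA) (zeroR hA e)

/-- key order criterion. -/
lemma exoLe_iff {ξ π : E → E} (hξ : A.IsExo ξ) (hπ : A.IsExo π) :
    A.exoLe ξ π ↔ ξ ∘ A.exoCompl π = obot A := by
  constructor
  · intro h
    funext e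
    show ξ (A.exoCompl π e) = A.zero
    rw [h]
    show ξ (π (A.exoCompl π e)) = A.zero
    rw [compl_ker hA hπ, exo_zero hA hξ]
  · intro h
    funext e
    show ξ e = ξ (π e)
    have h1 := exoCompl_spec hA hπ e
    have h2 := hξ.1 _ _ _ h1
    have h3 : ξ (A.exoCompl π e) = A.zero := congrFun h e
    rw [h3] at h2
    exact uniq hA h2 (zeroR hA _)

lemma exoLe_refl {π : E → E} (hπ : A.IsExo π) : A.exoLe π π :=
  (exo_idem_fun hA hπ).symm

omit hA in
lemma exoLe_trans {ξ π ρ : E → E} (h1 : A.exoLe ξ π) (h2 : A.exoLe π ρ) :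
    A.exoLe ξ ρ := by
  show ξ = ξ ∘ ρ
  calc ξ = ξ ∘ π := h1
  _ = ξ ∘ (π ∘ ρ) := by rw [← h2]
  _ = (ξ ∘ π) ∘ ρ := rfl
  _ = ξ ∘ ρ := by rw [← h1]

lemma exoLe_antisymm {ξ π : E → E} (hξ : A.IsExo ξ) (hπ : A.IsExo π)
    (h1 : A.exoLe ξ π) (h2 : A.exoLe π ξ) : ξ = π := by
  funext e
  have e1 : ξ e = ξ (π e) := congrFun h1 e
  have e2 : π e = π (ξ e) := congrFun h2 e
  rw [e1, e2, exo_comm hA hπ hξ, hξ.2.1]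

end Compl

section BoolOps
variable (hA : A.IsGPEA)
include hA

omit hA in
lemma bot_exoLe (π : E → E) : A.exoLe (obot A) π := rfl

omit hA in
lemma exoLe_top (π : E → E) : A.exoLe π id := rfl

lemma inf_exoLe_left {π ξ : E → E} (hπ : A.IsExo π) (hξ : A.IsExo ξ) :
    A.exoLe (π ∘ ξ) π := by
  funext e
  show π (ξ e) = π (ξ (π e))
  rw [exo_comm hA hξ hπ, hπ.2.1]

lemma inf_exoLe_right {π ξ : E → E} (hπ : A.IsExo π) (hξ : A.IsExo ξ) :
    A.exoLe (π ∘ ξ) ξ := by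
  funext e
  show π (ξ e) = π (ξ (ξ e))
  rw [hξ.2.1]

omit hA in
lemma exoLe_inf {π ξ ρ : E → E} (h1 : A.exoLe ρ π) (h2 : A.exoLe ρ ξ) :
    A.exoLe ρ (π ∘ ξ) := by
  show ρ = ρ ∘ (π ∘ ξ)
  calc ρ = ρ ∘ ξ := h2
  _ = (ρ ∘ π) ∘ ξ := by rw [← h1]
  _ = ρ ∘ (π ∘ ξ) := rfl

lemma comp_exoLe_comp_right {x y z : E → E} (hy : A.IsExo y) (hz : A.IsExo z)
    (h : A.exoLe x y) : A.exoLe (x ∘ z) (y ∘ z) := by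
  funext e
  show x (z e) = x (z (y (z e)))
  rw [exo_comm hA hz hy (z e), hz.2.1]
  exact congrFun h (z e)

lemma compl_antitone {ξ π : E → E} (hξ : A.IsExo ξ) (hπ : A.IsExo π)
    (h : A.exoLe ξ π) : A.exoLe (A.exoCompl π) (A.exoCompl ξ) := by
  rw [exoLe_iff hA (exoCompl_isExo hA hπ) (exoCompl_isExo hA hξ),
    compl_compl hA hξ]
  funext e
  show A.exoCompl π (ξ e) = A.zero
  have h1 : ξ e = ξ (π e) := congrFun h e
  refine ker_of_le hA (exoCompl_isExo hA hπ) (compl_of_fix hA hπ (hπ.2.1 e)) ?_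
  rw [h1]
  exact hξ.2.2.1 (π e)

lemma exoSup_isExo {π ξ : E → E} (hπ : A.IsExo π) (hξ : A.IsExo ξ) :
    A.IsExo (A.exoSup π ξ) :=
  exoCompl_isExo hA (comp_isExo hA (exoCompl_isExo hA hπ) (exoCompl_isExo hA hξ))

lemma exoSup_compl {π ξ : E → E} (hπ : A.IsExo π) (hξ : A.IsExo ξ) :
    A.exoCompl (A.exoSup π ξ) = A.exoCompl π ∘ A.exoCompl ξ :=
  compl_compl hA (comp_isExo hA (exoCompl_isExo hA hπ) (exoCompl_isExo hA hξ))

lemma exoLe_sup_left {π ξ : E → E} (hπ : A.IsExo π) (hξ : A.IsExo ξ) :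
    A.exoLe π (A.exoSup π ξ) := by
  rw [exoLe_iff hA hπ (exoSup_isExo hA hπ hξ), exoSup_compl hA hπ hξ]
  funext e
  show π (A.exoCompl π (A.exoCompl ξ e)) = A.zero
  exact compl_ker hA hπ _

lemma exoLe_sup_right {π ξ : E → E} (hπ : A.IsExo π) (hξ : A.IsExo ξ) :
    A.exoLe ξ (A.exoSup π ξ) := by
  rw [exoLe_iff hA hξ (exoSup_isExo hA hπ hξ), exoSup_compl hA hπ hξ]
  funext e
  show ξ (A.exoCompl π (A.exoCompl ξ e)) = A.zero
  rw [exo_comm hA (exoCompl_isExo hA hπ) (exoCompl_isExo hA hξ) e]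
  exact compl_ker hA hξ _

lemma sup_exoLe {π ξ ρ : E → E} (hπ : A.IsExo π) (hξ : A.IsExo ξ)
    (hρ : A.IsExo ρ) (h1 : A.exoLe π ρ) (h2 : A.exoLe ξ ρ) :
    A.exoLe (A.exoSup π ξ) ρ := by
  have hρ' := exoCompl_isExo hA hρ
  have hc1 := compl_antitone hA hπ hρ h1
  have hc2 := compl_antitone hA hξ hρ h2
  have h3 : A.exoLe (A.exoCompl ρ) (A.exoCompl π ∘ A.exoCompl ξ) :=
    exoLe_inf hc1 hc2
  have h4 := compl_antitone hA hρ'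
    (comp_isExo hA (exoCompl_isExo hA hπ) (exoCompl_isExo hA hξ)) h3
  rw [compl_compl hA hρ] at h4
  exact h4

lemma exo_inf_compl {π : E → E} (hπ : A.IsExo π) :
    π ∘ A.exoCompl π = obot A := by
  funext e; exact compl_ker hA hπ e

lemma exo_compl_inf {π : E → E} (hπ : A.IsExo π) :
    A.exoCompl π ∘ π = obot A := by
  funext e
  exact compl_of_fix hA hπ (hπ.2.1 e)

lemma exo_sup_compl_eq_top {π : E → E} (hπ : A.IsExo π) :
    A.exoSup π (A.exoCompl π) = id := by
  show A.exoCompl (A.exoCompl π ∘ A.exoCompl (A.exoCompl π)) = id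
  rw [compl_compl hA hπ, exo_compl_inf hA hπ, compl_bot hA]

/-- distributivity. -/
lemma exo_le_sup_inf {a b c : E → E} (ha : A.IsExo a) (hb : A.IsExo b)
    (hc : A.IsExo c) :
    A.exoLe (A.exoSup a b ∘ A.exoSup a c) (A.exoSup a (b ∘ c)) := by
  have hab := exoSup_isExo hA ha hb
  have hac := exoSup_isExo hA ha hc
  have hbc := comp_isExo hA hb hc
  have ha' := exoCompl_isExo hA ha
  have hw : A.IsExo (A.exoSup a b ∘ A.exoSup a c) := comp_isExo hA hab hac
  rw [exoLe_iff hA hw (exoSup_isExo hA ha hbc), exoSup_compl hA ha hbc]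
  -- goal : (sup a b ∘ sup a c) ∘ (a′ ∘ (b∘c)′) = obot A
  have hu : A.exoLe ((A.exoSup a b ∘ A.exoSup a c) ∘ A.exoCompl a) (b ∘ c) := by
    refine exoLe_inf ?_ ?_
    · -- ≤ b
      have s1 : A.exoLe ((A.exoSup a b ∘ A.exoSup a c) ∘ A.exoCompl a)
          (A.exoSup a b ∘ A.exoCompl a) :=
        comp_exoLe_comp_right hA hab ha' (inf_exoLe_left hA hab hac)
      refine exoLe_trans s1 ?_
      rw [exoLe_iff hA (comp_isExo hA hab ha') hb]
      show A.exoSup a b ∘ (A.exoCompl a ∘ A.exoCompl b) = obot A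
      rw [← exoSup_compl hA ha hb]
      exact exo_inf_compl hA hab
    · -- ≤ c
      have s1 : A.exoLe ((A.exoSup a b ∘ A.exoSup a c) ∘ A.exoCompl a)
          (A.exoSup a c ∘ A.exoCompl a) :=
        comp_exoLe_comp_right hA hac ha' (inf_exoLe_right hA hab hac)
      refine exoLe_trans s1 ?_
      rw [exoLe_iff hA (comp_isExo hA hac ha') hc]
      show A.exoSup a c ∘ (A.exoCompl a ∘ A.exoCompl c) = obot A
      rw [← exoSup_compl hA ha hc]
      exact exo_inf_compl hA hac
  rw [exoLe_iff hA (comp_isExo hA hw ha') hbc] at hu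
  exact hu

end BoolOps

section Lists
variable (hA : A.IsGPEA)
include hA

lemma lst_uniq {l : List E} {s t : E} (h1 : A.ListSumsTo l s)
    (h2 : A.ListSumsTo l t) : s = t := by
  induction l generalizing s t with
  | nil => rw [show s = A.zero from h1, show t = A.zero from h2]
  | cons a l ih =>
    obtain ⟨u, hu, hs⟩ := h1
    obtain ⟨v, hv, ht⟩ := h2
    rw [ih hu hv] at hs
    exact uniq hA hs ht

omit hA in
lemma lst_nil : A.ListSumsTo [] A.zero := rfl

lemma lst_singleton (a : E) : A.ListSumsTo [a] a := ⟨A.zero, rfl, zeroR hA a⟩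

lemma lst_append {l₁ l₂ : List E} {s : E} (h : A.ListSumsTo (l₁ ++ l₂) s) :
    ∃ s₁ s₂, A.ListSumsTo l₁ s₁ ∧ A.ListSumsTo l₂ s₂ ∧ A.R s₁ s₂ s := by
  induction l₁ generalizing s with
  | nil => exact ⟨A.zero, s, rfl, h, zeroL hA s⟩
  | cons a l ih =>
    obtain ⟨t, ht, hs⟩ := h
    obtain ⟨s₁, s₂, h1, h2, h3⟩ := ih ht
    obtain ⟨as₁, has₁, hfin⟩ := assoc2 hA h3 hs
    exact ⟨as₁, s₂, ⟨s₁, h1, has₁⟩, h2, hfin⟩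

/-- every member of a list sum is below the sum. -/
lemma lst_le {l : List E} {s a : E} (h : A.ListSumsTo l s) (ha : a ∈ l) :
    A.le a s := by
  induction l generalizing s with
  | nil => cases ha
  | cons b l ih =>
    obtain ⟨t, ht, hs⟩ := h
    rcases List.mem_cons.1 ha with h1 | h1
    · subst h1; exact le_of_R_left hA hs
    · exact le_trans hA (ih ht h1) (le_of_R_right hA hs)

lemma lst_ker {π : E → E} (hπ : A.IsExo π) {l : List E} {s : E}
    (h : A.ListSumsTo l s) (hl : ∀ a ∈ l, π a = A.zero) : π s = A.zero := by
  induction l generalizing s with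
  | nil => rw [show s = A.zero from h]; exact exo_zero hA hπ
  | cons a l ih =>
    obtain ⟨t, ht, hs⟩ := h
    exact ker_sum hA hπ (hl a (by simp)) (ih ht fun b hb => hl b (by simp [hb])) hs

lemma lst_exo {π : E → E} (hπ : A.IsExo π) {l : List E} {s : E}
    (h : A.ListSumsTo l s) : A.ListSumsTo (l.map π) (π s) := by
  induction l generalizing s with
  | nil =>
    have hs : s = A.zero := h
    subst hs
    show A.ListSumsTo [] (π A.zero)
    rw [exo_zero hA hπ]
    exact lst_nil
  | cons a l ih =>
    obtain ⟨t, ht, hs⟩ := h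
    exact ⟨π t, ih ht, hπ.1 _ _ _ hs⟩

/-- F2 : if x ∈ Fix π, y ∈ Ker π, x ⊕ y = s and x,y ≤ b then s ≤ b. -/
lemma fix_ker_sum_le {π : E → E} (hπ : A.IsExo π) {x y s b : E}
    (hx : π x = x) (hy : π y = A.zero) (hs : A.R x y s)
    (hxb : A.le x b) (hyb : A.le y b) : A.le s b := by
  -- x ≤ πb, y ≤ π'b
  have hxπb : A.le x (π b) := by
    have := exo_mono hA hπ hxb; rwa [hx] at this
  have hyπ'b : A.le y (A.exoCompl π b) := by
    have := exo_mono hA (exoCompl_isExo hA hπ) hyb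
    rwa [compl_of_ker hA hπ hy] at this
  obtain ⟨u', hu'⟩ := leL_of_le hA hxπb
  obtain ⟨w, hw1, hw2⟩ := assoc1 hA hu' (exoCompl_spec hA hπ b)
  -- w = x ⊕ π'b ≤ b
  obtain ⟨v, hv⟩ := hyπ'b
  obtain ⟨xy, hxy, hxyv⟩ := assoc2 hA hv hw1
  have : xy = s := uniq hA hxy hs
  subst this
  exact le_trans hA (le_of_R_left hA hxyv) (le_of_leL hA ⟨u', hw2⟩)

end Lists

section Finsets
variable (hA : A.IsGPEA)
variable {ι : Type v} {g : ι → E} {π : ι → E → E}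
include hA

omit hA in
lemma sup_unique {S : Set E} {s t : E} (hA : A.IsGPEA) (h1 : A.IsSup S s)
    (h2 : A.IsSup S t) : s = t :=
  le_antisymm hA (h1.2 t h2.1) (h2.2 s h1.1)

omit hA in
lemma fst_empty : A.FinsetSumsTo g ∅ A.zero := by
  intro l hnd hl
  have : l = [] := by
    classical
    rcases l with _ | ⟨a, t⟩
    · rfl
    · exfalso
      have : a ∈ (letI : DecidableEq ι := Classical.decEq ι; (a :: t).toFinset) := by
        letI : DecidableEq ι := Classical.decEq ι
        simp
      rw [hl] at this
      simp at this
  subst this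
  exact lst_nil

lemma fst_singleton (i : ι) : A.FinsetSumsTo g {i} (g i) := by
  intro l hnd hl
  letI : DecidableEq ι := Classical.decEq ι
  have hmem : ∀ a ∈ l, a = i := by
    intro a ha
    have : a ∈ l.toFinset := List.mem_toFinset.2 ha
    rw [hl] at this
    exact Finset.mem_singleton.1 this
  have : l = [i] := by
    rcases l with _ | ⟨a, t⟩
    · exfalso
      have : i ∈ ([] : List ι).toFinset := by rw [hl]; simp
      simp at this
    · have ha : a = i := hmem a (by simp)
      subst ha
      rcases t with _ | ⟨b, t'⟩
      · rfl
      · exfalso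
        have hb : b = a := hmem b (by simp)
        subst hb
        simp at hnd
  subst this
  simp only [List.map]
  exact lst_singleton hA (g i)

lemma fst_uniq {F : Finset ι} {s t : E} (h1 : A.FinsetSumsTo g F s)
    (h2 : A.FinsetSumsTo g F t) : s = t := by
  classical
  have hl1 := h1 F.toList F.nodup_toList (by
    letI : DecidableEq ι := Classical.decEq ι
    exact F.toList_toFinset)
  have hl2 := h2 F.toList F.nodup_toList (by
    letI : DecidableEq ι := Classical.decEq ι
    exact F.toList_toFinset)
  exact lst_uniq hA hl1 hl2

/-- finite sums of a ΓEX-orthogonal family lie below any upper bound of the family. -/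
lemma finsum_le_of_ub (hexo : ∀ i, A.IsExo (π i))
    (hdisj : ∀ i j, i ≠ j → A.exoDisjoint (π i) (π j))
    (hfix : ∀ i, π i (g i) = g i) {b : E} (hb : ∀ i, A.le (g i) b)
    {l : List ι} (hnd : l.Nodup) {s : E} (h : A.ListSumsTo (l.map g) s) :
    A.le s b := by
  induction l generalizing s with
  | nil => exact (show s = A.zero from h) ▸ zero_le hA b
  | cons j l ih =>
    obtain ⟨t, ht, hs⟩ := h
    have hker : π j t = A.zero := by
      refine lst_ker hA (hexo j) ht ?_
      intro a ha
      obtain ⟨i, hi, rfl⟩ := List.mem_map.1 ha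
      have hij : j ≠ i := by
        rintro rfl; exact (List.nodup_cons.1 hnd).1 hi
      rw [← hfix i]
      exact hdisj j i hij (g i)
    exact fix_ker_sum_le hA (hexo j) (hfix j) hker hs (hb j)
      (ih (List.nodup_cons.1 hnd).2 ht)

lemma fst_le_of_ub (hexo : ∀ i, A.IsExo (π i))
    (hdisj : ∀ i j, i ≠ j → A.exoDisjoint (π i) (π j))
    (hfix : ∀ i, π i (g i) = g i) {b : E} (hb : ∀ i, A.le (g i) b)
    {F : Finset ι} {s : E} (h : A.FinsetSumsTo g F s) : A.le s b := by
  classical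
  have hl := h F.toList F.nodup_toList (by
    letI : DecidableEq ι := Classical.decEq ι
    exact F.toList_toFinset)
  exact finsum_le_of_ub hA hexo hdisj hfix hb F.nodup_toList hl

end Finsets

section Sums
variable (hA : A.IsGPEA)
include hA

lemma add_left {T : Set E} {u f Y : E} (hsup : A.IsSup T u) (hne : T.Nonempty)
    (hY : A.R f u Y) : A.IsSup {y | ∃ t ∈ T, A.R f t y} Y := by
  have hmk : ∀ t ∈ T, ∃ y, A.R f t y ∧ A.le y Y := by
    intro t ht
    obtain ⟨z, hz⟩ := hsup.1 t ht
    obtain ⟨ft, hft, hftz⟩ := assoc2 hA hz hY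
    exact ⟨ft, hft, le_of_R_left hA hftz⟩
  constructor
  · rintro y ⟨t, ht, hy⟩
    obtain ⟨y', hy', hle⟩ := hmk t ht
    rwa [uniq hA hy hy']
  · intro b hb
    obtain ⟨t₀, ht₀⟩ := hne
    obtain ⟨y₀, hy₀, -⟩ := hmk t₀ ht₀
    have hfb : A.le f b := le_trans hA (le_of_R_left hA hy₀) (hb y₀ ⟨t₀, ht₀, hy₀⟩)
    obtain ⟨b₁, hb₁⟩ := hfb
    have hub : ∀ t ∈ T, A.le t b₁ := by
      intro t ht
      obtain ⟨y, hy, -⟩ := hmk t ht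
      obtain ⟨c, hc⟩ := hb y ⟨t, ht, hy⟩
      obtain ⟨tc, htc, hftc⟩ := assoc1 hA hy hc
      have : tc = b₁ := cancL hA hftc hb₁
      exact this ▸ le_of_R_left hA htc
    obtain ⟨z', hz'⟩ := hsup.2 b₁ hub
    obtain ⟨fu, hfu, hfin⟩ := assoc2 hA hz' hb₁
    have : fu = Y := uniq hA hfu hY
    subst this
    exact le_of_R_left hA hfin

lemma add_right {T : Set E} {u f X : E} (hsup : A.IsSup T u) (hne : T.Nonempty)
    (hX : A.R u f X) : A.IsSup {y | ∃ t ∈ T, A.R t f y} X := by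
  have hmk : ∀ t ∈ T, ∃ y, A.R t f y ∧ A.le y X := by
    intro t ht
    obtain ⟨w, hw⟩ := leL_of_le hA (hsup.1 t ht)
    obtain ⟨tf, htf, hwtf⟩ := assoc1 hA hw hX
    exact ⟨tf, htf, le_of_leL hA ⟨w, hwtf⟩⟩
  constructor
  · rintro y ⟨t, ht, hy⟩
    obtain ⟨y', hy', hle⟩ := hmk t ht
    rwa [uniq hA hy hy']
  · intro b hb
    obtain ⟨t₀, ht₀⟩ := hne
    obtain ⟨y₀, hy₀, -⟩ := hmk t₀ ht₀
    have hfb : A.le f b := le_trans hA (le_of_R_right hA hy₀) (hb y₀ ⟨t₀, ht₀, hy₀⟩)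
    obtain ⟨b₂, hb₂⟩ := leL_of_le hA hfb
    have hub : ∀ t ∈ T, A.le t b₂ := by
      intro t ht
      obtain ⟨y, hy, -⟩ := hmk t ht
      obtain ⟨d, hd⟩ := leL_of_le hA (hb y ⟨t, ht, hy⟩)
      obtain ⟨dt, hdt, hdtf⟩ := assoc2 hA hy hd
      have : dt = b₂ := cancR hA hdtf hb₂
      exact this ▸ le_of_leL hA ⟨d, hdt⟩
    obtain ⟨w, hw⟩ := leL_of_le hA (hsup.2 b₂ hub)
    obtain ⟨uf, huf, hfin⟩ := assoc1 hA hw hb₂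
    have : uf = X := uniq hA huf hX
    subst this
    exact le_of_leL hA ⟨w, hfin⟩

end Sums

section Interchange
variable (hA : A.IsGPEA)
variable {ι : Type v} {π : ι → E → E}
include hA

/-- perp with each member of a finite orthogonal sum implies perp with the sum. -/
lemma perp_list_sum (hexo : ∀ i, A.IsExo (π i))
    (hdisj : ∀ i j, i ≠ j → A.exoDisjoint (π i) (π j))
    {g : ι → E} (hfix : ∀ i, π i (g i) = g i) {f : E}
    (hperp : ∀ i, A.perp f (g i))
    {l : List ι} (hnd : l.Nodup) {s : E} (h : A.ListSumsTo (l.map g) s) :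
    A.perp f s := by
  induction l generalizing s with
  | nil =>
    have : s = A.zero := h
    subst this
    exact ⟨f, zeroR hA f, zeroL hA f⟩
  | cons j l ih =>
    obtain ⟨t, ht, hs⟩ := h
    have hker : π j t = A.zero := by
      refine lst_ker hA (hexo j) ht ?_
      intro a ha
      obtain ⟨i, hi, rfl⟩ := List.mem_map.1 ha
      have hij : j ≠ i := by rintro rfl; exact (List.nodup_cons.1 hnd).1 hi
      rw [← hfix i]
      exact hdisj j i hij (g i)
    exact perp_sum hA (hexo j) (hfix j) hker hs (hperp j)
      (ih (List.nodup_cons.1 hnd).2 ht)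

/-- interchange lemma for finite orthogonal sums. -/
lemma lst_interchange (hexo : ∀ i, A.IsExo (π i))
    (hdisj : ∀ i j, i ≠ j → A.exoDisjoint (π i) (π j))
    {af bf sf : ι → E}
    (hr : ∀ i, A.R (af i) (bf i) (sf i))
    (hfa : ∀ i, π i (af i) = af i) (hfb : ∀ i, π i (bf i) = bf i)
    {l : List ι} (hnd : l.Nodup) {s : E} (h : A.ListSumsTo (l.map sf) s) :
    ∃ wa wb, A.ListSumsTo (l.map af) wa ∧ A.ListSumsTo (l.map bf) wb ∧
      A.R wa wb s := by
  induction l generalizing s with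
  | nil =>
    have : s = A.zero := h
    subst this
    exact ⟨A.zero, A.zero, rfl, rfl, zeroR hA A.zero⟩
  | cons j l ih =>
    obtain ⟨t, ht, hs⟩ := h
    obtain ⟨wa', wb', hwa, hwb, hab⟩ := ih (List.nodup_cons.1 hnd).2 ht
    have hkera : π j wa' = A.zero := by
      refine lst_ker hA (hexo j) hwa ?_
      intro a ha
      obtain ⟨i, hi, rfl⟩ := List.mem_map.1 ha
      have hij : j ≠ i := by rintro rfl; exact (List.nodup_cons.1 hnd).1 hi
      rw [← hfa i]; exact hdisj j i hij (af i)
    have hkerb : π j wb' = A.zero := by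
      refine lst_ker hA (hexo j) hwb ?_
      intro a ha
      obtain ⟨i, hi, rfl⟩ := List.mem_map.1 ha
      have hij : j ≠ i := by rintro rfl; exact (List.nodup_cons.1 hnd).1 hi
      rw [← hfb i]; exact hdisj j i hij (bf i)
    -- s = (af j ⊕ bf j) ⊕ (wa' ⊕ wb')
    obtain ⟨v₁, hv₁, hav₁⟩ := assoc1 hA (hr j) hs
    obtain ⟨bw, hbw, hbwv⟩ := assoc2 hA hab hv₁
    obtain ⟨p, hp1, hp2⟩ := exo_perp hA (hexo j) (hfb j) hkera
    have : bw = p := uniq hA hbw hp1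
    subst this
    obtain ⟨v₂, hv₂, hwav⟩ := assoc1 hA hp2 hbwv
    obtain ⟨aw, haw, hfin⟩ := assoc2 hA hwav hav₁
    exact ⟨aw, v₂, ⟨wa', hwa, haw⟩, ⟨wb', hwb, hv₂⟩, hfin⟩

end Interchange

section Main
variable (hA : A.IsGPEA)
include hA

lemma fst_mono {ι : Type v} {g : ι → E} {G H : Finset ι} {x y : E}
    (hGH : G ⊆ H) (hx : A.FinsetSumsTo g G x) (hy : A.FinsetSumsTo g H y) :
    A.le x y := by
  letI : DecidableEq ι := Classical.decEq ι
  set l₁ := G.toList with hl₁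
  set l₂ := (H \ G).toList with hl₂
  have hnd : (l₂ ++ l₁).Nodup := by
    refine List.Nodup.append (H \ G).nodup_toList G.nodup_toList ?_
    intro a ha hb
    have h1 : a ∈ H \ G := by rwa [Finset.mem_toList] at ha
    have h2 : a ∈ G := by rwa [Finset.mem_toList] at hb
    exact (Finset.mem_sdiff.1 h1).2 h2
  have htf : (l₂ ++ l₁).toFinset = H := by
    rw [List.toFinset_append, hl₁, hl₂, Finset.toList_toFinset,
      Finset.toList_toFinset, Finset.sdiff_union_of_subset hGH]
  have hsum := hy (l₂ ++ l₁) hnd htf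
  rw [List.map_append] at hsum
  obtain ⟨s₂, s₁, h2, h1, hr⟩ := lst_append hA hsum
  have he : s₁ = x := lst_uniq hA h1 (hx l₁ G.nodup_toList G.toList_toFinset)
  subst he
  exact le_of_leL hA ⟨s₂, hr⟩

lemma perp_orthosum (hCO : A.IsCOGPEA) {ι : Type u} {π : ι → E → E}
    (hexo : ∀ i, A.IsExo (π i))
    (hdisj : ∀ i j, i ≠ j → A.exoDisjoint (π i) (π j))
    {g : ι → E} (hfix : ∀ i, π i (g i) = g i) {u : E}
    (hos : A.IsOrthosum g u) {f : E} (hperp : ∀ i, A.perp f (g i)) :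
    A.perp f u := by
  have hGEX : A.GEXOrthogonal g := ⟨π, hexo, hdisj, hfix⟩
  have hCO2 := hCO.2 g u hGEX hos f
  obtain ⟨Y, hY⟩ := hCO2.1 fun i => ⟨_, (hperp i).choose_spec.1⟩
  obtain ⟨X, hX⟩ := hCO2.2 fun i => ⟨_, (hperp i).choose_spec.2⟩
  have hTne : Set.Nonempty {t | ∃ F, A.FinsetSumsTo g F t} := ⟨A.zero, ∅, fst_empty⟩
  have hfin : ∀ t ∈ {t | ∃ F, A.FinsetSumsTo g F t}, A.perp f t := by
    rintro t ⟨F, hF⟩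
    letI : DecidableEq ι := Classical.decEq ι
    exact perp_list_sum hA hexo hdisj hfix hperp F.nodup_toList
      (hF F.toList F.nodup_toList F.toList_toFinset)
  have hS1 := add_left hA hos.2 hTne hY
  have hS2 := add_right hA hos.2 hTne hX
  have hsets : {y | ∃ t ∈ {t | ∃ F, A.FinsetSumsTo g F t}, A.R f t y} =
      {y | ∃ t ∈ {t | ∃ F, A.FinsetSumsTo g F t}, A.R t f y} := by
    ext y
    constructor
    · rintro ⟨t, ht, hy⟩
      obtain ⟨s0, h1, h2⟩ := hfin t ht
      exact ⟨t, ht, (uniq hA hy h1) ▸ h2⟩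
    · rintro ⟨t, ht, hy⟩
      obtain ⟨s0, h1, h2⟩ := hfin t ht
      exact ⟨t, ht, (uniq hA hy h2) ▸ h1⟩
  rw [hsets] at hS1
  have : Y = X := sup_unique hA hS1 hS2
  subst this
  exact ⟨Y, hY, hX⟩

/-- Theorem 5.5 core. -/
theorem core (hCO : A.IsCOGPEA) {ι : Type u} (π : ι → E → E)
    (hexo : ∀ i, A.IsExo (π i))
    (hdisj : ∀ i j, i ≠ j → A.exoDisjoint (π i) (π j)) :
    ∃ σ : E → E, A.IsExoLUB (Set.range π) σ ∧
      ∀ e : E, A.IsSup (Set.range fun i => π i e) (σ e) ∧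
        A.IsOrthosum (fun i => π i e) (σ e) := by
  have hGEX : ∀ e, A.GEXOrthogonal fun i => π i e :=
    fun e => ⟨π, hexo, hdisj, fun i => (hexo i).2.1 e⟩
  choose σ hσ using fun e => hCO.1 (fun i => π i e) (hGEX e)
  have hsupT : ∀ e, A.IsSup {t | ∃ F, A.FinsetSumsTo (fun i => π i e) F t} (σ e) :=
    fun e => (hσ e).2
  have hsup_range : ∀ e, A.IsSup (Set.range fun i => π i e) (σ e) := by
    intro e
    constructor
    · rintro x ⟨i, rfl⟩
      exact (hsupT e).1 _ ⟨{i}, fst_singleton hA i⟩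
    · intro b hb
      refine (hsupT e).2 b ?_
      rintro t ⟨F, hF⟩
      exact fst_le_of_ub hA hexo hdisj (fun i => (hexo i).2.1 e)
        (fun i => hb _ ⟨i, rfl⟩) hF
  have hσ_le : ∀ e, A.le (σ e) e := fun e =>
    (hsup_range e).2 e (by rintro x ⟨i, rfl⟩; exact (hexo i).2.2.1 e)
  have hπσ : ∀ i e, π i (σ e) = π i e := by
    intro i e
    refine le_antisymm hA (exo_mono hA (hexo i) (hσ_le e)) ?_
    have h1 : A.le (π i e) (σ e) := (hsup_range e).1 _ ⟨i, rfl⟩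
    have h2 := exo_mono hA (hexo i) h1
    rwa [(hexo i).2.1 e] at h2
  have hσ_congr : ∀ x y, (∀ i, π i x = π i y) → σ x = σ y := by
    intro x y h
    have hxy : (fun i => π i x) = fun i => π i y := funext h
    have h1 := (hσ x).2
    rw [hxy] at h1
    exact sup_unique hA h1 (hσ y).2
  have hσσ : ∀ e, σ (σ e) = σ e := fun e => hσ_congr (σ e) e fun i => hπσ i e
  have hTne : ∀ (x : E), Set.Nonempty {t | ∃ F, A.FinsetSumsTo (fun i => π i x) F t} :=
    fun x => ⟨A.zero, ∅, fst_empty⟩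
  -- EXC1
  have hEXC1 : ∀ e f s, A.R e f s → A.R (σ e) (σ f) (σ s) := by
    intro e f s hef
    have hdef : ∀ i, A.Defined (σ e) (π i f) := by
      intro i
      have hm : A.R (π i e) (π i f) (π i s) := (hexo i).1 _ _ _ hef
      obtain ⟨a₂, ha₂, hka₂⟩ := exo_decomp hA (hexo i) (σ e)
      rw [hπσ i e] at ha₂
      have hmfix : π i (π i s) = π i s := (hexo i).2.1 s
      obtain ⟨q, hq1, hq2⟩ := exo_perp hA (hexo i) hmfix hka₂
      obtain ⟨ca₂, hca₂, haq⟩ := assoc1 hA hm hq1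
      obtain ⟨w0, hw0a, hw0b⟩ := exo_perp hA (hexo i) ((hexo i).2.1 f) hka₂
      have hcw : ca₂ = w0 := uniq hA hca₂ hw0a
      subst hcw
      obtain ⟨aa₂, haa₂, hfin⟩ := assoc2 hA hw0b haq
      have : aa₂ = σ e := uniq hA haa₂ ha₂
      subst this
      exact ⟨q, hfin⟩
    obtain ⟨t, ht⟩ := (hCO.2 (fun i => π i f) (σ f) (hGEX f) (hσ f) (σ e)).1 hdef
    have hπt : ∀ i, π i t = π i s := by
      intro i
      have h1 := (hexo i).1 _ _ _ ht
      rw [hπσ i e, hπσ i f] at h1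
      exact uniq hA h1 ((hexo i).1 _ _ _ hef)
    have hts : A.le (σ s) t := by
      refine (hsupT s).2 t ?_
      rintro x ⟨F, hF⟩
      have hF' : A.FinsetSumsTo (fun i => π i t) F x := by
        have hfe : (fun i => π i s) = fun i => π i t := funext fun i => (hπt i).symm
        rwa [hfe] at hF
      exact fst_le_of_ub hA hexo hdisj (fun i => (hexo i).2.1 t)
        (fun i => (hexo i).2.2.1 t) hF'
    have hst : A.le t (σ s) := by
      have houter := add_left hA (hsupT f) (hTne f) ht
      refine houter.2 (σ s) ?_
      rintro y ⟨v, ⟨F₂, hF₂⟩, hy⟩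
      have hinner := add_right hA (hsupT e) (hTne e) hy
      refine hinner.2 (σ s) ?_
      rintro z ⟨w, ⟨F₁, hF₁⟩, hz⟩
      letI : DecidableEq ι := Classical.decEq ι
      set F := F₁ ∪ F₂ with hFdef
      obtain ⟨sF, hsF⟩ := (hσ s).1 F
      obtain ⟨wF, hwF⟩ := (hσ e).1 F
      obtain ⟨vF, hvF⟩ := (hσ f).1 F
      have hl := hsF F.toList F.nodup_toList F.toList_toFinset
      obtain ⟨wa, wb, hwa, hwb, hab⟩ := lst_interchange hA hexo hdisj
        (fun i => (hexo i).1 _ _ _ hef) (fun i => (hexo i).2.1 e)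
        (fun i => (hexo i).2.1 f) F.nodup_toList hl
      have hwaF : wa = wF :=
        lst_uniq hA hwa (hwF F.toList F.nodup_toList F.toList_toFinset)
      have hwbF : wb = vF :=
        lst_uniq hA hwb (hvF F.toList F.nodup_toList F.toList_toFinset)
      subst hwaF; subst hwbF
      have h1 : A.le w wa := fst_mono hA Finset.subset_union_left hF₁ hwF
      have h2 : A.le v wb := fst_mono hA Finset.subset_union_right hF₂ hvF
      have h3 : A.le z sF := mono2 hA h1 h2 hz hab
      exact le_trans hA h3 ((hsupT s).1 sF ⟨F, hsF⟩)
    have : t = σ s := le_antisymm hA hst hts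
    subst this
    exact ht
  -- EXC4
  have hEXC4 : ∀ e f, σ e = e → σ f = A.zero → A.perp e f := by
    intro e f he hf
    have hπf : ∀ i, π i f = A.zero := by
      intro i
      have h1 : A.le (π i f) (σ f) := (hsup_range f).1 _ ⟨i, rfl⟩
      rw [hf] at h1
      exact le_zero hA h1
    have hperp : ∀ i, A.perp f (π i e) := fun i =>
      perp_symm hA (exo_perp hA (hexo i) ((hexo i).2.1 e) (hπf i))
    have hos := hσ e
    rw [he] at hos
    exact perp_symm hA
      (perp_orthosum hA hCO hexo hdisj (fun i => (hexo i).2.1 e) hos hperp)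
  have hIsExo : A.IsExo σ := ⟨hEXC1, hσσ, hσ_le, hEXC4⟩
  refine ⟨σ, ⟨hIsExo, ?_, ?_⟩, fun e => ⟨hsup_range e, hσ e⟩⟩
  · rintro x ⟨i, rfl⟩
    exact funext fun e => (hπσ i e).symm
  · intro β hβ hb
    funext e
    show σ e = σ (β e)
    refine (hσ_congr (β e) e ?_).symm
    intro i
    exact (congrFun (hb (π i) ⟨i, rfl⟩) e).symm
end Main

section CBA
variable (hA : A.IsGPEA)

/-- the exocenter as a boolean algebra. -/
noncomputable def boolAlg : BooleanAlgebra {π : E → E // A.IsExo π} where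
  le x y := A.exoLe x.1 y.1
  le_refl x := exoLe_refl hA x.2
  le_trans x y z h1 h2 := by exact exoLe_trans h1 h2
  le_antisymm x y h1 h2 := by exact Subtype.ext (exoLe_antisymm hA x.2 y.2 h1 h2)
  inf x y := ⟨x.1 ∘ y.1, comp_isExo hA x.2 y.2⟩
  inf_le_left x y := inf_exoLe_left hA x.2 y.2
  inf_le_right x y := inf_exoLe_right hA x.2 y.2
  le_inf x y z h1 h2 := by
    show A.exoLe x.1 (y.1 ∘ z.1)
    exact exoLe_inf h1 h2
  sup x y := ⟨A.exoSup x.1 y.1, exoSup_isExo hA x.2 y.2⟩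
  le_sup_left x y := exoLe_sup_left hA x.2 y.2
  le_sup_right x y := exoLe_sup_right hA x.2 y.2
  sup_le x y z h1 h2 := by exact sup_exoLe hA x.2 y.2 z.2 h1 h2
  le_sup_inf x y z := exo_le_sup_inf hA x.2 y.2 z.2
  top := ⟨id, id_isExo' hA⟩
  bot := ⟨obot A, obot_isExo hA⟩
  le_top x := exoLe_top x.1
  bot_le x := bot_exoLe x.1
  compl x := ⟨A.exoCompl x.1, exoCompl_isExo hA x.2⟩
  inf_compl_le_bot x := by
    show A.exoLe (x.1 ∘ A.exoCompl x.1) (obot A)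
    show x.1 ∘ A.exoCompl x.1 = (x.1 ∘ A.exoCompl x.1) ∘ obot A
    rw [exo_inf_compl hA x.2]
    rfl
  top_le_sup_compl x := by
    show A.exoLe id (A.exoSup x.1 (A.exoCompl x.1))
    rw [exo_sup_compl_eq_top hA x.2]
    exact exoLe_top _

end CBA

section Abstract
variable {α : Type*}

lemma abstract_lub [BooleanAlgebra α]
    (h : ∀ D : Set α, (D.Pairwise fun x y => x ⊓ y = ⊥) → ∃ d, IsLUB D d)
    (S : Set α) : ∃ d, IsLUB S d := by
  set P : Set (Set α) := {D | (D.Pairwise fun x y => x ⊓ y = ⊥) ∧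
    ∀ x ∈ D, ∃ s ∈ S, x ≤ s} with hP
  obtain ⟨M, hM⟩ := zorn_subset P (by
    intro c hc hchain
    refine ⟨⋃₀ c, ⟨?_, ?_⟩, fun s hs => Set.subset_sUnion_of_mem hs⟩
    · rintro x ⟨Dx, hDx, hx⟩ y ⟨Dy, hDy, hy⟩ hxy
      rcases hchain.total hDx hDy with hsub | hsub
      · exact (hc hDy).1 (hsub hx) hy hxy
      · exact (hc hDx).1 hx (hsub hy) hxy
    · rintro x ⟨Dx, hDx, hx⟩
      exact (hc hDx).2 x hx)
  obtain ⟨d, hd⟩ := h M hM.prop.1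
  refine ⟨d, ?_, ?_⟩
  · -- upper bound of S
    intro s hs
    by_contra hsd
    set x := s ⊓ dᶜ with hxdef
    have hx : x ≠ ⊥ := by
      intro h0
      exact hsd ((sdiff_eq_bot_iff).1 (by rwa [sdiff_eq]))
    have hxM : x ∉ M := by
      intro hmem
      have hxd : x ≤ d := hd.1 hmem
      have : x ≤ ⊥ := by
        calc x = x ⊓ x := by rw [inf_idem]
        _ ≤ d ⊓ dᶜ := inf_le_inf hxd inf_le_right
        _ = ⊥ := inf_compl_eq_bot
      exact hx (le_bot_iff.1 this)
    have hins : insert x M ∈ P := by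
      constructor
      · intro a ha b hb hab
        rcases Set.mem_insert_iff.1 ha with rfl | haM
        · rcases Set.mem_insert_iff.1 hb with rfl | hbM
          · exact absurd rfl hab
          · have hbd : b ≤ d := hd.1 hbM
            refine le_bot_iff.1 ?_
            calc x ⊓ b ≤ dᶜ ⊓ d := inf_le_inf inf_le_right hbd
            _ = ⊥ := by rw [inf_comm, inf_compl_eq_bot]
        · rcases Set.mem_insert_iff.1 hb with rfl | hbM
          · have had : a ≤ d := hd.1 haM
            refine le_bot_iff.1 ?_
            calc a ⊓ x ≤ d ⊓ dᶜ := inf_le_inf had inf_le_right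
            _ = ⊥ := inf_compl_eq_bot
          · exact hM.prop.1 haM hbM hab
      · rintro a ha
        rcases ha with rfl | haM
        · exact ⟨s, hs, inf_le_left⟩
        · exact hM.prop.2 a haM
    have : insert x M ⊆ M := hM.2 hins (Set.subset_insert x M)
    exact hxM (this (Set.mem_insert x M))
  · intro b hb
    refine hd.2 ?_
    intro x hxM
    obtain ⟨s, hsS, hxs⟩ := hM.prop.2 x hxM
    exact _root_.le_trans hxs (hb hsS)

/-- lub of lower bounds is a glb. -/
lemma isGLB_of_lub_lowerBounds [Preorder α] {S : Set α} {c : α}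
    (h : IsLUB (lowerBounds S) c) : IsGLB S c :=
  ⟨fun x hx => h.2 fun _ hy => hy hx, fun _ hb => h.1 hb⟩

noncomputable def abstractCBA [BooleanAlgebra α]
    (h : ∀ S : Set α, ∃ d, IsLUB S d) : CompleteBooleanAlgebra α := by
  have hglb : ∀ S : Set α, ∃ d, IsGLB S d := fun S => by
    obtain ⟨d, hd⟩ := h (lowerBounds S)
    exact ⟨d, isGLB_of_lub_lowerBounds hd⟩
  refine
  { ‹BooleanAlgebra α› with
    sSup := fun S => (h S).choose
    isLUB_sSup := fun S => (h S).choose_spec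
    sInf := fun S => (hglb S).choose
    isGLB_sInf := fun S => (hglb S).choose_spec }

end Abstract

noncomputable def exoCBA (hA : A.IsGPEA) (hCO : A.IsCOGPEA) :
    CompleteBooleanAlgebra {π : E → E // A.IsExo π} :=
  letI BA : BooleanAlgebra {π : E → E // A.IsExo π} := boolAlg hA
  abstractCBA (abstract_lub (by
    intro D hD
    have hexo : ∀ i : ↥D, A.IsExo i.1.1 := fun i => i.1.2
    have hdisj : ∀ i j : ↥D, i ≠ j → A.exoDisjoint i.1.1 j.1.1 := by
      intro i j hij e
      have hne : (i : {π : E → E // A.IsExo π}) ≠ j := fun h => hij (Subtype.ext h)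
      have h0 : (i : {π : E → E // A.IsExo π}) ⊓ j = ⊥ := hD i.2 j.2 hne
      have h1 : i.1.1 ∘ j.1.1 = obot A := congrArg Subtype.val h0
      exact congrFun h1 e
    obtain ⟨σ, hlub, -⟩ := core hA hCO (fun i : ↥D => i.1.1) hexo hdisj
    refine ⟨⟨σ, hlub.1⟩, ?_, ?_⟩
    · intro x hx
      exact hlub.2.1 x.1 ⟨⟨x, hx⟩, rfl⟩
    · intro b hb
      show A.exoLe σ b.1
      refine hlub.2.2 b.1 b.2 ?_
      rintro p ⟨i, rfl⟩
      exact hb i.2))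

end GPEAproof

open GPEApaper PartialAlg in
/-- Theorem 5.5 and Corollary 5.6: in a COGPEA, every pairwise disjoint family
(πᵢ) in ΓEX(E) has a supremum σ = ⋁ᵢ πᵢ in the boolean algebra ΓEX(E), and
σ e = ⋁ᵢ πᵢ e = ⊕ᵢ πᵢ e for every e ∈ E. Consequently, the exocenter of a
COGPEA is a complete boolean algebra. -/
theorem stmt_12 {E : Type u} (A : PartialAlg E) (hA : A.IsGPEA)
    (hCO : A.IsCOGPEA)
    {ι : Type u} (π : ι → E → E) (hexo : ∀ i, A.IsExo (π i))
    (hdisj : ∀ i j, i ≠ j → A.exoDisjoint (π i) (π j)) :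
    (∃ σ : E → E, A.IsExoLUB (Set.range π) σ ∧
      ∀ e : E, A.IsSup (Set.range fun i => π i e) (σ e) ∧
        A.IsOrthosum (fun i => π i e) (σ e)) ∧
    ∃ B : CompleteBooleanAlgebra {π : E → E // A.IsExo π}, letI := B;
      ∀ x y : {π : E → E // A.IsExo π}, x ≤ y ↔ A.exoLe x.1 y.1 := by
  constructor
  · exact GPEAproof.core hA hCO π hexo hdisj
  · exact ⟨GPEAproof.exoCBA hA hCO, fun x y => Iff.rfl⟩
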